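/- Let 1 < p, q < ∞ with 1/p + 1/q = 1. The continuous dual of bv_p is isometrically isomorphic to d_q; explicitly, there exists a linear bijection from bv_p* onto d_q that preserves norms. -/

import Mathlib

noncomputable section

open Filter Topology
open scoped ENNReal

/-- The difference operator: sequences indexed from `0`, representing `(x_k)_{k ≥ 1}`
(so index `n : ℕ` stands for `x_{n+1}`), with the convention `x_0 = 0`. -/
def delta (x : ℕ → ℂ) : ℕ → ℂ := fun n => x n - if n = 0 then 0 else x (n - 1)

/-- The difference operator as a linear equivalence of the space of all sequences,
with inverse given by partial sums. -/
def deltaL : (ℕ → ℂ) ≃ₗ[ℂ] (ℕ → ℂ) where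
  toFun := delta
  invFun y := fun n => ∑ i ∈ Finset.range (n + 1), y i
  map_add' x y := by
    funext n
    simp only [delta, Pi.add_apply]
    split <;> ring
  map_smul' c x := by
    funext n
    simp only [delta, Pi.smul_apply, smul_eq_mul, RingHom.id_apply]
    split <;> ring
  left_inv x := by
    funext n
    induction n with
    | zero => simp [delta]
    | succ k ih =>
      show (∑ i ∈ Finset.range (k + 1 + 1), delta x i) = x (k + 1)
      rw [Finset.sum_range_succ]
      have ih' : (∑ i ∈ Finset.range (k + 1), delta x i) = x k := ih
      rw [ih']
      simp [delta]
  right_inv y := by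
    funext n
    show delta (fun n => ∑ i ∈ Finset.range (n + 1), y i) n = y n
    cases n with
    | zero => simp [delta]
    | succ k => simp [delta, Finset.sum_range_succ]

/-- The space `bv_p`, as a submodule of the space of all complex sequences:
`x ∈ bv_p` iff `Δx ∈ ℓ^p`. -/
def bvSubmodule (p : ℝ≥0∞) : Submodule ℂ (ℕ → ℂ) where
  carrier := {x | Memℓp (delta x) p}
  add_mem' {x y} hx hy := by
    have : delta (x + y) = delta x + delta y := map_add deltaL x y
    simpa [Set.mem_setOf_eq, this] using hx.add hy
  zero_mem' := by
    have : delta (0 : ℕ → ℂ) = 0 := map_zero deltaL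
    simp [Set.mem_setOf_eq, this]
    exact zero_memℓp
  smul_mem' c x hx := by
    have : delta (c • x) = c • delta x := map_smul deltaL c x
    simpa [Set.mem_setOf_eq, this] using hx.const_smul c

/-- The space `bv_p` as a type.  (A `def`, not an `abbrev`, so that it does not pick up
the product topology of the ambient sequence space.) -/
def bv (p : ℝ≥0∞) : Type := ↥(bvSubmodule p)

namespace bv

instance (p : ℝ≥0∞) : AddCommGroup (bv p) :=
  inferInstanceAs (AddCommGroup ↥(bvSubmodule p))

instance (p : ℝ≥0∞) : Module ℂ (bv p) :=
  inferInstanceAs (Module ℂ ↥(bvSubmodule p))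

/-- The underlying sequence of an element of `bv_p`. -/
def seq {p : ℝ≥0∞} (x : bv p) : ℕ → ℂ := Subtype.val (x : ↥(bvSubmodule p))

lemma memℓp_delta {p : ℝ≥0∞} (x : bv p) : Memℓp (delta (seq x)) p :=
  (x : ↥(bvSubmodule p)).2

/-- The difference operator, as a linear map from `bv_p` to `ℓ^p`. -/
def toLp (p : ℝ≥0∞) : bv p →ₗ[ℂ] lp (fun _ : ℕ => ℂ) p where
  toFun x := ⟨delta (seq x), memℓp_delta x⟩
  map_add' x y := by
    ext n
    have : delta (seq x + seq y) = delta (seq x) + delta (seq y) := map_add deltaL _ _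
    change delta (seq (x + y)) n = _
    have hseq : seq (x + y) = seq x + seq y := rfl
    rw [hseq, this]
    rfl
  map_smul' c x := by
    ext n
    have : delta (c • seq x) = c • delta (seq x) := map_smul deltaL c _
    change delta (seq (c • x)) n = _
    have hseq : seq (c • x) = c • seq x := rfl
    rw [hseq, this]
    rfl

lemma toLp_injective (p : ℝ≥0∞) : Function.Injective (toLp p) := by
  intro x y h
  have h' : delta (seq x) = delta (seq y) := by
    have := congrArg (Subtype.val) h
    exact this
  have : seq x = seq y := deltaL.injective h'
  exact Subtype.ext this

noncomputable instance (p : ℝ≥0∞) [Fact (1 ≤ p)] : NormedAddCommGroup (bv p) :=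
  NormedAddCommGroup.induced (bv p) (lp (fun _ : ℕ => ℂ) p) (toLp p) (toLp_injective p)

noncomputable instance (p : ℝ≥0∞) [Fact (1 ≤ p)] : NormedSpace ℂ (bv p) :=
  NormedSpace.induced ℂ (bv p) (lp (fun _ : ℕ => ℂ) p) (toLp p)

end bv

/-- The sequence `b^{(k+1)}`: `1` from position `k` on (positions indexed from `0`). -/
def bSeq (k : ℕ) : ℕ → ℂ := fun n => if k ≤ n then 1 else 0

/-- The sequence `e^{(k+1)}`: `1` exactly at position `k`. -/
def eSeq (k : ℕ) : ℕ → ℂ := fun n => if n = k then 1 else 0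

lemma memℓp_eSeq (p : ℝ≥0∞) [Fact (1 ≤ p)] (k : ℕ) : Memℓp (eSeq k) p := by
  rcases eq_or_ne p ∞ with rfl | hp
  · apply memℓp_infty
    apply Set.Finite.bddAbove
    apply Set.Finite.subset (Set.finite_singleton (0:ℝ) |>.insert 1)
    rintro r ⟨n, rfl⟩
    simp only [eSeq]
    split <;> simp
  · apply memℓp_gen
    apply summable_of_ne_finset_zero (s := {k})
    intro n hn
    simp only [Finset.mem_singleton] at hn
    simp only [eSeq, if_neg hn, norm_zero]
    have hp0 : 0 < p.toReal := by
      have h1 : (1 : ℝ≥0∞) ≤ p := Fact.out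
      exact ENNReal.toReal_pos (by intro h; rw [h] at h1; simp at h1) hp
    exact Real.zero_rpow hp0.ne'

lemma delta_bSeq (k : ℕ) : delta (bSeq k) = eSeq k := by
  funext n
  rcases n with _ | m <;>
    simp only [delta, bSeq, eSeq, Nat.add_sub_cancel, Nat.succ_ne_zero, if_false, reduceIte,
      sub_zero] <;>
    split_ifs <;> first | omega | (exfalso; omega) | (norm_num; done) | tauto

lemma delta_eSeq (k : ℕ) : delta (eSeq k) = eSeq k - eSeq (k + 1) := by
  funext n
  rcases n with _ | m <;>
    simp only [delta, eSeq, Pi.sub_apply, Nat.add_sub_cancel, Nat.succ_ne_zero, if_false,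
      reduceIte, sub_zero] <;>
    split_ifs <;> first | omega | (exfalso; omega) | (norm_num; done) | tauto

/-- The element `b^{(k+1)}` of `bv_p`. -/
def bvB (p : ℝ≥0∞) [Fact (1 ≤ p)] (k : ℕ) : bv p :=
  ⟨bSeq k, show Memℓp (delta (bSeq k)) p by rw [delta_bSeq]; exact memℓp_eSeq p k⟩

/-- The element `e^{(k+1)}` of `bv_p`. -/
def bvE (p : ℝ≥0∞) [Fact (1 ≤ p)] (k : ℕ) : bv p :=
  ⟨eSeq k, show Memℓp (delta (eSeq k)) p by
    rw [delta_eSeq]; exact (memℓp_eSeq p k).sub (memℓp_eSeq p (k + 1))⟩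

/-- The partial sums `∑_{i=k}^n x_i` of the tail series starting at position `k`. -/
def tailPartial (x : ℕ → ℂ) (k : ℕ) : ℕ → ℂ := fun n => ∑ i ∈ Finset.Icc k n, x i

/-- The sum `∑_{i=k}^∞ x_i` of the tail series (a junk value if the series diverges). -/
noncomputable def tailSum (x : ℕ → ℂ) (k : ℕ) : ℂ := limUnder atTop (tailPartial x k)

/-- Membership in the sequence space `d_∞`: every tail series `∑_{i=k}^∞ x_i` converges and
the suprema of the moduli of the tail sums is finite. -/
def memDInfty (x : ℕ → ℂ) : Prop :=
  ∃ s : ℕ → ℂ, (∀ k, Filter.Tendsto (tailPartial x k) atTop (𝓝 (s k))) ∧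
    BddAbove (Set.range fun k => ‖s k‖)

/-- Membership in the sequence space `d_q`: every tail series `∑_{i=k}^∞ x_i` converges and
`∑_k |∑_{i=k}^∞ x_i|^q < ∞`. -/
def memDq (q : ℝ) (x : ℕ → ℂ) : Prop :=
  (∀ k, ∃ s : ℂ, Filter.Tendsto (tailPartial x k) atTop (𝓝 s)) ∧
    Summable fun k => ‖tailSum x k‖ ^ q

/-- The `ℓ^q`-norm of a sequence. -/
noncomputable def lqNorm (q : ℝ) (a : ℕ → ℂ) : ℝ := (∑' k, ‖a k‖ ^ q) ^ (1 / q)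

/-- The `d_q`-norm of a sequence. -/
noncomputable def dqNorm (q : ℝ) (x : ℕ → ℂ) : ℝ := (∑' k, ‖tailSum x k‖ ^ q) ^ (1 / q)

/-- The supremum norm of a sequence. -/
noncomputable def supNorm (a : ℕ → ℂ) : ℝ := ⨆ k, ‖a k‖

/-- The `d_∞`-norm of a sequence. -/
noncomputable def dInftyNorm (x : ℕ → ℂ) : ℝ := ⨆ k, ‖tailSum x k‖

section Aux

variable (P : ℝ≥0∞) [Fact (1 ≤ P)]

lemma bv_norm_eq (x : bv P) : ‖x‖ = ‖bv.toLp P x‖ := rfl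

lemma toLp_coe (x : bv P) : ((bv.toLp P x : lp (fun _ : ℕ => ℂ) P) : ℕ → ℂ) = delta (bv.seq x) := rfl

lemma toLp_bvB (k : ℕ) : bv.toLp P (bvB P k) = lp.single P k (1 : ℂ) := by
  apply lp.ext
  funext j
  have h1 : ((bv.toLp P (bvB P k) : lp (fun _ : ℕ => ℂ) P) : ℕ → ℂ) j = eSeq k j := by
    rw [toLp_coe]
    show delta (bSeq k) j = eSeq k j
    rw [delta_bSeq]
  rw [h1]
  by_cases h : j = k
  · subst h; rw [lp.single_apply_self]; simp [eSeq]
  · rw [lp.single_apply_ne P k _ h]; simp [eSeq, h]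

lemma bv_hasSum (hP : P ≠ ⊤) (x : bv P) :
    HasSum (fun k => delta (bv.seq x) k • bvB P k) x := by
  have h := lp.hasSum_single hP (bv.toLp P x)
  rw [HasSum, tendsto_iff_norm_sub_tendsto_zero] at h ⊢
  convert h using 2 with s
  rw [bv_norm_eq]
  congr 1
  rw [map_sub, map_sum]
  congr 1
  refine Finset.sum_congr rfl fun k _ => ?_
  rw [map_smul, toLp_bvB, ← lp.single_smul]
  congr 1
  show delta (bv.seq x) k • (1 : ℂ) = _
  rw [smul_eq_mul, mul_one]
  rfl

lemma f_hasSum (hP : P ≠ ⊤) (f : bv P →L[ℂ] ℂ) (x : bv P) :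
    HasSum (fun k => delta (bv.seq x) k * f (bvB P k)) (f x) := by
  have h := (bv_hasSum P hP x).mapL f
  simpa [smul_eq_mul] using h

end Aux

/-- For conjugate exponents `1 < p, q < ∞`, the continuous dual of `bv_p`
is isometrically isomorphic to `d_q`: there is a linear bijection from `bv_p*` onto `d_q`
preserving norms. -/
theorem bvp_dual_isometric_dq (p q : ℝ) (hp : 1 < p) (hq : 1 < q)
    (hpq : 1 / p + 1 / q = 1) [Fact (1 ≤ ENNReal.ofReal p)] :
    ∃ g : (bv (ENNReal.ofReal p) →L[ℂ] ℂ) →ₗ[ℂ] (ℕ → ℂ),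
      (∀ f, memDq q (g f)) ∧ Function.Injective g ∧
      (∀ x : ℕ → ℂ, memDq q x → ∃ f, g f = x) ∧
      (∀ f, dqNorm q (g f) = ‖f‖) := by
  classical
  set P := ENNReal.ofReal p with hPdef
  set Q := ENNReal.ofReal q with hQdef
  have hp0 : (0:ℝ) < p := lt_trans zero_lt_one hp
  have hq0 : (0:ℝ) < q := lt_trans zero_lt_one hq
  have hPt : P.toReal = p := ENNReal.toReal_ofReal hp0.le
  have hQt : Q.toReal = q := ENNReal.toReal_ofReal hq0.le
  have hPne : P ≠ ⊤ := ENNReal.ofReal_ne_top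
  have hp' : 0 < P.toReal := by rw [hPt]; exact hp0
  have hq' : 0 < Q.toReal := by rw [hQt]; exact hq0
  haveI : Fact (1 ≤ Q) := ⟨ENNReal.one_le_ofReal.mpr hq.le⟩
  have hconj : P.toReal.HolderConjugate Q.toReal := by
    rw [hPt, hQt]
    exact Real.holderConjugate_iff.mpr ⟨hp, by rw [inv_eq_one_div, inv_eq_one_div]; exact hpq⟩
  have hpp : p * (1/p) = 1 := by field_simp
  have hqq : q * (1/q) = 1 := by field_simp
  have hqp : (q - 1) * p = q := by
    have h1 : q + p = p * q := by
      field_simp at hpq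
      linarith
    nlinarith [h1]
  -- Key finite estimate
  have key_est : ∀ f : bv P →L[ℂ] ℂ, ∀ s : Finset ℕ,
      ∑ k ∈ s, ‖f (bvB P k)‖ ^ q ≤ ‖f‖ ^ q := by
    intro f s
    set c : ℕ → ℂ := fun k =>
      ((‖f (bvB P k)‖ ^ (q - 2) : ℝ) : ℂ) * (starRingEnd ℂ) (f (bvB P k)) with hc
    have hck : ∀ k, c k * f (bvB P k) = ((‖f (bvB P k)‖ ^ q : ℝ) : ℂ) := by
      intro k
      by_cases h : f (bvB P k) = 0
      · simp [hc, h, Real.zero_rpow hq0.ne']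
      · have hn : (0:ℝ) < ‖f (bvB P k)‖ := norm_pos_iff.mpr h
        rw [hc, mul_assoc]
        have h2 : (starRingEnd ℂ) (f (bvB P k)) * f (bvB P k)
            = ((‖f (bvB P k)‖ ^ (2:ℝ) : ℝ) : ℂ) := by
          rw [mul_comm, Complex.mul_conj, Complex.normSq_eq_norm_sq]
          norm_cast
        rw [h2, ← Complex.ofReal_mul, ← Real.rpow_add hn]
        norm_num
    have hcn : ∀ k, ‖c k‖ = ‖f (bvB P k)‖ ^ (q - 1) := by
      intro k
      by_cases h : f (bvB P k) = 0
      · simp [hc, h, Real.zero_rpow (by linarith : q - 1 ≠ 0)]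
      · have hn : (0:ℝ) < ‖f (bvB P k)‖ := norm_pos_iff.mpr h
        rw [hc, norm_mul, RCLike.norm_conj, Complex.norm_real, Real.norm_eq_abs,
          abs_of_nonneg (Real.rpow_nonneg (norm_nonneg _) _)]
        nth_rewrite 2 [← Real.rpow_one ‖f (bvB P k)‖]
        rw [← Real.rpow_add hn]
        congr 1
        ring
    set S := ∑ k ∈ s, ‖f (bvB P k)‖ ^ q with hS
    have hS0 : 0 ≤ S := Finset.sum_nonneg fun k _ => Real.rpow_nonneg (norm_nonneg _) _
    set xs : bv P := ∑ k ∈ s, c k • bvB P k with hxs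
    have hfxs : f xs = (S : ℂ) := by
      rw [hxs, map_sum]
      rw [show (∑ k ∈ s, f (c k • bvB P k)) = ∑ k ∈ s, c k * f (bvB P k) by
        refine Finset.sum_congr rfl fun k _ => ?_; rw [map_smul, smul_eq_mul]]
      rw [show (∑ k ∈ s, c k * f (bvB P k)) = ∑ k ∈ s, ((‖f (bvB P k)‖ ^ q : ℝ) : ℂ) by
        exact Finset.sum_congr rfl fun k _ => hck k]
      rw [hS]
      push_cast
      rfl
    have hxsnorm : ‖xs‖ = S ^ (1/p) := by
      have h3 : bv.toLp P xs = ∑ k ∈ s, lp.single P k (c k) := by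
        rw [hxs, map_sum]
        refine Finset.sum_congr rfl fun k _ => ?_
        rw [map_smul, toLp_bvB, ← lp.single_smul, smul_eq_mul, mul_one]
      have h4 : ‖xs‖ ^ p = ∑ k ∈ s, ‖c k‖ ^ p := by
        have := lp.norm_sum_single hp' c s
        rw [hPt] at this
        rw [bv_norm_eq, h3, this]
      have h5 : ∑ k ∈ s, ‖c k‖ ^ p = S := by
        rw [hS]
        refine Finset.sum_congr rfl fun k _ => ?_
        rw [hcn k, ← Real.rpow_mul (norm_nonneg _), hqp]
      have h6 : ‖xs‖ ^ p = S := by rw [h4, h5]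
      rw [← h6, ← Real.rpow_mul (norm_nonneg _), hpp, Real.rpow_one]
    have hle : S ≤ ‖f‖ * S ^ (1/p) := by
      calc S = ‖(S : ℂ)‖ := by rw [Complex.norm_real, Real.norm_eq_abs, abs_of_nonneg hS0]
        _ = ‖f xs‖ := by rw [hfxs]
        _ ≤ ‖f‖ * ‖xs‖ := f.le_opNorm xs
        _ = ‖f‖ * S ^ (1/p) := by rw [hxsnorm]
    rcases eq_or_lt_of_le hS0 with h | hSpos
    · rw [← h]; exact Real.rpow_nonneg (norm_nonneg _) _
    · have h7 : S ^ (1/q) ≤ ‖f‖ := by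
        have h8 : S ^ (1/p) * S ^ (1/q) ≤ ‖f‖ * S ^ (1/p) := by
          rw [← Real.rpow_add hSpos, hpq, Real.rpow_one]; exact hle
        have h9 : 0 < S ^ (1/p) := Real.rpow_pos_of_pos hSpos _
        calc S ^ (1/q) = S ^ (1/p) * S ^ (1/q) / S ^ (1/p) := by field_simp
          _ ≤ ‖f‖ * S ^ (1/p) / S ^ (1/p) := by gcongr
          _ = ‖f‖ := by field_simp
      calc S = (S ^ (1/q)) ^ q := by
            rw [← Real.rpow_mul hS0, one_div_mul_cancel hq0.ne', Real.rpow_one]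
        _ ≤ ‖f‖ ^ q := Real.rpow_le_rpow (Real.rpow_nonneg hS0 _) h7 hq0.le
  have hsummable : ∀ f : bv P →L[ℂ] ℂ, Summable fun k => ‖f (bvB P k)‖ ^ q :=
    fun f => summable_of_sum_le (fun k => Real.rpow_nonneg (norm_nonneg _) _) (key_est f)
  have htsum_le : ∀ f : bv P →L[ℂ] ℂ, (∑' k, ‖f (bvB P k)‖ ^ q) ≤ ‖f‖ ^ q :=
    fun f => Summable.tsum_le_of_sum_le (hsummable f) (key_est f)
  have hmem : ∀ f : bv P →L[ℂ] ℂ, Memℓp (fun k => f (bvB P k)) Q :=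
    fun f => memℓp_gen (by rw [hQt]; exact hsummable f)
  -- norm equality
  have hnorm : ∀ f : bv P →L[ℂ] ℂ, (∑' k, ‖f (bvB P k)‖ ^ q) ^ (1/q) = ‖f‖ := by
    intro f
    refine le_antisymm ?_ ?_
    · calc (∑' k, ‖f (bvB P k)‖ ^ q) ^ (1/q) ≤ (‖f‖ ^ q) ^ (1/q) :=
          Real.rpow_le_rpow (tsum_nonneg fun k => Real.rpow_nonneg (norm_nonneg _) _)
            (htsum_le f) (by positivity)
        _ = ‖f‖ := by rw [← Real.rpow_mul (norm_nonneg _), hqq, Real.rpow_one]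
    · set tlp : lp (fun _ : ℕ => ℂ) Q := ⟨fun k => f (bvB P k), hmem f⟩ with htlp
      have hnt : ‖tlp‖ = (∑' k, ‖f (bvB P k)‖ ^ q) ^ (1/q) := by
        rw [lp.norm_eq_tsum_rpow hq' tlp, hQt]
      rw [← hnt]
      apply f.opNorm_le_bound (norm_nonneg tlp)
      intro x
      have h5 := f_hasSum P hPne f x
      have hsum2 : Summable fun k => ‖delta (bv.seq x) k * f (bvB P k)‖ := by
        have := lp.summable_mul hconj (bv.toLp P x) tlp
        refine this.congr fun k => ?_
        rw [norm_mul]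
        rfl
      calc ‖f x‖ = ‖∑' k, delta (bv.seq x) k * f (bvB P k)‖ := by rw [h5.tsum_eq]
        _ ≤ ∑' k, ‖delta (bv.seq x) k * f (bvB P k)‖ := norm_tsum_le_tsum_norm hsum2
        _ = ∑' k, ‖(bv.toLp P x : ℕ → ℂ) k‖ * ‖(tlp : ℕ → ℂ) k‖ :=
          tsum_congr fun k => norm_mul _ _
        _ ≤ ‖bv.toLp P x‖ * ‖tlp‖ := lp.tsum_mul_le_mul_norm' hconj _ tlp
        _ = ‖tlp‖ * ‖x‖ := by rw [← bv_norm_eq]; ring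
  -- coefficients tend to zero
  have htz : ∀ f : bv P →L[ℂ] ℂ, Filter.Tendsto (fun k => f (bvB P k)) atTop (𝓝 0) := by
    intro f
    rw [tendsto_zero_iff_norm_tendsto_zero]
    have h6 := (hsummable f).tendsto_atTop_zero
    have h7 : ∀ k, (‖f (bvB P k)‖ ^ q) ^ (1/q) = ‖f (bvB P k)‖ := fun k => by
      rw [← Real.rpow_mul (norm_nonneg _), hqq, Real.rpow_one]
    have h8 := h6.rpow_const (p := 1/q) (Or.inr (by positivity))
    rw [Real.zero_rpow (one_div_ne_zero hq0.ne')] at h8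
    exact h8.congr h7
  -- telescoping tail sums
  have htp : ∀ (f : bv P →L[ℂ] ℂ) (k : ℕ),
      Filter.Tendsto (tailPartial (fun j => f (bvB P j) - f (bvB P (j+1))) k) atTop
        (𝓝 (f (bvB P k))) := by
    intro f k
    have htel : ∀ n, k ≤ n →
        tailPartial (fun j => f (bvB P j) - f (bvB P (j+1))) k n
          = f (bvB P k) - f (bvB P (n+1)) := by
      intro n hn
      induction n with
      | zero =>
        have hk0 : k = 0 := Nat.le_zero.mp hn
        subst hk0
        simp [tailPartial]
      | succ m ih =>
        rcases Nat.lt_succ_iff_lt_or_eq.mp (Nat.lt_succ_of_le hn) with h | h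
        · have hkm : k ≤ m := Nat.lt_succ_iff.mp h
          unfold tailPartial
          rw [Finset.sum_Icc_succ_top (le_trans hkm (Nat.le_succ m))]
          have := ih hkm
          unfold tailPartial at this
          rw [this]
          ring
        · subst h
          unfold tailPartial
          rw [Finset.Icc_self, Finset.sum_singleton]
    have h8 : Filter.Tendsto (fun n => f (bvB P k) - f (bvB P (n+1))) atTop
        (𝓝 (f (bvB P k) - 0)) :=
      tendsto_const_nhds.sub ((htz f).comp (tendsto_add_atTop_nat 1))
    rw [sub_zero] at h8
    refine h8.congr' ?_
    filter_upwards [eventually_ge_atTop k] with n hn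
    exact (htel n hn).symm
  have hTs : ∀ (f : bv P →L[ℂ] ℂ) (k : ℕ),
      tailSum (fun j => f (bvB P j) - f (bvB P (j+1))) k = f (bvB P k) :=
    fun f k => (htp f k).limUnder_eq
  -- the linear map g
  refine ⟨{ toFun := fun f => fun k => f (bvB P k) - f (bvB P (k+1)),
            map_add' := fun f1 f2 => by
              funext k
              simp only [ContinuousLinearMap.add_apply, Pi.add_apply]
              ring,
            map_smul' := fun a f => by
              funext k
              simp only [ContinuousLinearMap.coe_smul', Pi.smul_apply, smul_eq_mul,
                RingHom.id_apply]
              ring }, ?_, ?_, ?_, ?_⟩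
  · -- memDq
    intro f
    simp only [LinearMap.coe_mk, AddHom.coe_mk]
    refine ⟨fun k => ⟨f (bvB P k), htp f k⟩, ?_⟩
    have : (fun k => ‖tailSum (fun j => f (bvB P j) - f (bvB P (j+1))) k‖ ^ q)
        = fun k => ‖f (bvB P k)‖ ^ q := funext fun k => by rw [hTs f k]
    rw [this]
    exact hsummable f
  · -- injective
    intro f1 f2 h
    simp only [LinearMap.coe_mk, AddHom.coe_mk] at h
    have hker : ∀ f : bv P →L[ℂ] ℂ, (∀ k, f (bvB P k) = f (bvB P (k+1))) → f = 0 := by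
      intro f hf
      have hconst : ∀ k, f (bvB P k) = 0 := by
        intro k
        have hmono : ∀ m, k ≤ m → f (bvB P m) = f (bvB P k) := by
          intro m hm
          induction m with
          | zero =>
            have : k = 0 := Nat.le_zero.mp hm
            subst this; rfl
          | succ n ih =>
            rcases Nat.lt_succ_iff_lt_or_eq.mp (Nat.lt_succ_of_le hm) with h' | h'
            · have hkn : k ≤ n := Nat.lt_succ_iff.mp h'
              rw [← hf n, ih hkn]
            · subst h'; rfl
        have h9 : Filter.Tendsto (fun m => f (bvB P m)) atTop (𝓝 (f (bvB P k))) := by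
          refine tendsto_const_nhds.congr' ?_
          filter_upwards [eventually_ge_atTop k] with m hm
          exact (hmono m hm).symm
        exact (tendsto_nhds_unique h9 (htz f))
      ext x
      have h10 := f_hasSum P hPne f x
      simp only [hconst, mul_zero] at h10
      have := h10.unique hasSum_zero
      simpa using this
    have hd : ∀ k, (f1 - f2) (bvB P k) = (f1 - f2) (bvB P (k+1)) := by
      intro k
      have hk := congrFun h k
      simp only [ContinuousLinearMap.sub_apply]
      linear_combination hk
    have := hker (f1 - f2) hd
    exact sub_eq_zero.mp this
  · -- surjective
    intro x hx
    obtain ⟨hx1, hx2⟩ := hx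
    have hconv : ∀ k, Filter.Tendsto (tailPartial x k) atTop (𝓝 (tailSum x k)) := by
      intro k
      obtain ⟨s, hs⟩ := hx1 k
      rw [tailSum, hs.limUnder_eq]
      exact hs
    have hxk : ∀ k, x k = tailSum x k - tailSum x (k+1) := by
      intro k
      have hsplit : ∀ n, k + 1 ≤ n → tailPartial x k n = x k + tailPartial x (k+1) n := by
        intro n hn
        unfold tailPartial
        have hins : Finset.Icc k n = insert k (Finset.Icc (k+1) n) := by
          ext j
          simp only [Finset.mem_Icc, Finset.mem_insert]
          omega
        rw [hins, Finset.sum_insert (by simp [Finset.mem_Icc])]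
      have h11 : Filter.Tendsto (tailPartial x k) atTop (𝓝 (x k + tailSum x (k+1))) := by
        refine (tendsto_const_nhds.add (hconv (k+1))).congr' ?_
        filter_upwards [eventually_ge_atTop (k+1)] with n hn
        exact (hsplit n hn).symm
      have := tendsto_nhds_unique (hconv k) h11
      linear_combination -this
    have hmem' : Memℓp (fun k => tailSum x k) Q := memℓp_gen (by rw [hQt]; exact hx2)
    set tlp : lp (fun _ : ℕ => ℂ) Q := ⟨fun k => tailSum x k, hmem'⟩ with htlp
    have hsum3 : ∀ z : bv P, Summable fun k => delta (bv.seq z) k * tailSum x k := by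
      intro z
      apply Summable.of_norm
      have := lp.summable_mul hconj (bv.toLp P z) tlp
      refine this.congr fun k => ?_
      rw [norm_mul]
      rfl
    set L : bv P →ₗ[ℂ] ℂ :=
      { toFun := fun z => ∑' k, delta (bv.seq z) k * tailSum x k,
        map_add' := by
          intro z w
          have hd : ∀ k, delta (bv.seq (z + w)) k
              = delta (bv.seq z) k + delta (bv.seq w) k := by
            intro k
            exact congrFun (map_add deltaL (bv.seq z) (bv.seq w)) k
          simp only [hd, add_mul]
          exact Summable.tsum_add (hsum3 z) (hsum3 w)
        map_smul' := by
          intro a z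
          have hd : ∀ k, delta (bv.seq (a • z)) k = a * delta (bv.seq z) k := by
            intro k
            exact congrFun (map_smul deltaL a (bv.seq z)) k
          simp only [hd, mul_assoc, RingHom.id_apply, smul_eq_mul]
          exact tsum_mul_left } with hL
    have hbound : ∀ z : bv P, ‖L z‖ ≤ ‖tlp‖ * ‖z‖ := by
      intro z
      have hsum4 : Summable fun k => ‖delta (bv.seq z) k * tailSum x k‖ := by
        have := lp.summable_mul hconj (bv.toLp P z) tlp
        refine this.congr fun k => ?_
        rw [norm_mul]
        rfl
      calc ‖L z‖ ≤ ∑' k, ‖delta (bv.seq z) k * tailSum x k‖ :=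
            norm_tsum_le_tsum_norm hsum4
        _ = ∑' k, ‖(bv.toLp P z : ℕ → ℂ) k‖ * ‖(tlp : ℕ → ℂ) k‖ :=
            tsum_congr fun k => norm_mul _ _
        _ ≤ ‖bv.toLp P z‖ * ‖tlp‖ := lp.tsum_mul_le_mul_norm' hconj _ tlp
        _ = ‖tlp‖ * ‖z‖ := by rw [← bv_norm_eq]; ring
    refine ⟨L.mkContinuous ‖tlp‖ hbound, ?_⟩
    simp only [LinearMap.coe_mk, AddHom.coe_mk]
    funext k
    have hLe : ∀ j, (L.mkContinuous ‖tlp‖ hbound) (bvB P j) = tailSum x j := by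
      intro j
      rw [LinearMap.mkContinuous_apply]
      show (∑' k, delta (bv.seq (bvB P j)) k * tailSum x k) = _
      have hd : ∀ k, delta (bv.seq (bvB P j)) k = eSeq j k := by
        intro k
        show delta (bSeq j) k = _
        rw [delta_bSeq]
      simp only [hd]
      rw [tsum_eq_single j (fun b hb => by simp [eSeq, hb])]
      simp [eSeq]
    rw [hLe, hLe]
    exact (hxk k).symm
  · -- norm
    intro f
    simp only [LinearMap.coe_mk, AddHom.coe_mk]
    unfold dqNorm
    have : (fun k => ‖tailSum (fun j => f (bvB P j) - f (bvB P (j+1))) k‖ ^ q)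
        = fun k => ‖f (bvB P k)‖ ^ q := funext fun k => by rw [hTs f k]
    rw [this]
    exact hnorm f
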